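/- Let a < b, let g : [a,b] → [0,∞) be a P-function that is Lebesgue integrable, and let f : [a,b] → [0,∞) be a Lebesgue integrable (g,P(I))-convex dominated function. Then |f(a) + f(b) − (1/(b−a)) ∫_a^b f(x) dx| ≤ g(a) + g(b) − (1/(b−a)) ∫_a^b g(x) dx. -/

import Mathlib

open MeasureTheory Set

theorem stmt17 (a b : ℝ) (hab : a < b) (f g : ℝ → ℝ)
    (hg0 : ∀ x ∈ Set.Icc a b, 0 ≤ g x)
    (hgconv : ∀ x ∈ Set.Icc a b, ∀ y ∈ Set.Icc a b, ∀ t ∈ Set.Ioo (0:ℝ) 1,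
      g (t * x + (1 - t) * y) ≤ g x + g y)
    (hgint : IntegrableOn g (Set.Icc a b))
    (hf0 : ∀ x ∈ Set.Icc a b, 0 ≤ f x)
    (hfint : IntegrableOn f (Set.Icc a b))
    (hfdom : ∀ x ∈ Set.Icc a b, ∀ y ∈ Set.Icc a b, ∀ t ∈ Set.Ioo (0:ℝ) 1,
      |f x + f y - f (t * x + (1 - t) * y)| ≤
        g x + g y - g (t * x + (1 - t) * y)) :
    |(f a + f b) - (1 / (b - a)) * ∫ x in a..b, f x| ≤
      (g a + g b) - (1 / (b - a)) * ∫ x in a..b, g x := by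
  have hba : (0:ℝ) < b - a := by linarith
  -- pointwise key inequality on Ioo a b
  have key : ∀ x ∈ Set.Ioo a b, |f a + f b - f x| ≤ g a + g b - g x := by
    intro x hx
    have ht : (b - x) / (b - a) ∈ Set.Ioo (0:ℝ) 1 := by
      constructor
      · exact div_pos (by linarith [hx.2]) hba
      · rw [div_lt_one hba]; linarith [hx.1]
    have hrep : (b - x) / (b - a) * a + (1 - (b - x) / (b - a)) * b = x := by
      field_simp
      ring
    have := hfdom a (by constructor <;> linarith) b (by constructor <;> linarith)
      _ ht
    rwa [hrep] at this
  have keyg : ∀ x ∈ Set.Ioo a b, 0 ≤ g a + g b - g x := by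
    intro x hx
    have h1 := key x hx
    have h2 := abs_nonneg (f a + f b - f x)
    linarith
  -- integrability
  have hfI : IntegrableOn f (Set.Ioo a b) := hfint.mono_set Ioo_subset_Icc_self
  have hgI : IntegrableOn g (Set.Ioo a b) := hgint.mono_set Ioo_subset_Icc_self
  have hFI : IntegrableOn (fun x => f a + f b - f x) (Set.Ioo a b) :=
    (integrableOn_const measure_Ioo_lt_top.ne).sub hfI
  have hGI : IntegrableOn (fun x => g a + g b - g x) (Set.Ioo a b) :=
    (integrableOn_const measure_Ioo_lt_top.ne).sub hgI
  have hmeas : MeasurableSet (Set.Ioo a b) := measurableSet_Ioo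
  -- main integral inequality
  have hint : |∫ x in Set.Ioo a b, (f a + f b - f x)| ≤
      ∫ x in Set.Ioo a b, (g a + g b - g x) := by
    calc |∫ x in Set.Ioo a b, (f a + f b - f x)|
        ≤ ∫ x in Set.Ioo a b, |f a + f b - f x| := by
          simpa [Real.norm_eq_abs] using
            norm_integral_le_integral_norm (μ := volume.restrict (Set.Ioo a b))
              (fun x => f a + f b - f x)
      _ ≤ ∫ x in Set.Ioo a b, (g a + g b - g x) := by
          apply setIntegral_mono_on hFI.abs hGI hmeas
          intro x hx
          exact key x hx
  have hvol : (volume (Set.Ioo a b)).toReal = b - a := by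
    rw [Real.volume_Ioo, ENNReal.toReal_ofReal (le_of_lt hba)]
  have hFval : ∫ x in Set.Ioo a b, (f a + f b - f x) =
      (b - a) * (f a + f b) - ∫ x in Set.Ioo a b, f x := by
    rw [integral_sub (integrableOn_const measure_Ioo_lt_top.ne : IntegrableOn (fun _ => f a + f b) (Set.Ioo a b) volume) hfI,
      setIntegral_const, measureReal_def, hvol, smul_eq_mul]
  have hGval : ∫ x in Set.Ioo a b, (g a + g b - g x) =
      (b - a) * (g a + g b) - ∫ x in Set.Ioo a b, g x := by
    rw [integral_sub (integrableOn_const measure_Ioo_lt_top.ne : IntegrableOn (fun _ => g a + g b) (Set.Ioo a b) volume) hgI,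
      setIntegral_const, measureReal_def, hvol, smul_eq_mul]
  have hfeq : ∫ x in a..b, f x = ∫ x in Set.Ioo a b, f x := by
    rw [intervalIntegral.integral_of_le (le_of_lt hab),
      MeasureTheory.integral_Ioc_eq_integral_Ioo]
  have hgeq : ∫ x in a..b, g x = ∫ x in Set.Ioo a b, g x := by
    rw [intervalIntegral.integral_of_le (le_of_lt hab),
      MeasureTheory.integral_Ioc_eq_integral_Ioo]
  rw [hFval, hGval] at hint
  rw [hfeq, hgeq]
  have h1 : f a + f b - 1 / (b - a) * ∫ x in Set.Ioo a b, f x =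
      (1 / (b - a)) * ((b - a) * (f a + f b) - ∫ x in Set.Ioo a b, f x) := by
    field_simp
  have h2 : g a + g b - 1 / (b - a) * ∫ x in Set.Ioo a b, g x =
      (1 / (b - a)) * ((b - a) * (g a + g b) - ∫ x in Set.Ioo a b, g x) := by
    field_simp
  rw [h1, h2, abs_mul, abs_of_pos (by positivity : (0:ℝ) < 1 / (b - a))]
  exact mul_le_mul_of_nonneg_left hint (by positivity)
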